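/- Let Ω ⊆ ℝⁿ be an open set, u : Ω → ℝ a bounded continuous function, ε > 0, and x ∈ Ω a point such that the closed ball of radius ρ(ε) := 2√(ε·sup_Ω |u|) centered at x is contained in Ω. Suppose the sup-convolution u^ε is (Fréchet) differentiable at x, and let y ∈ Ω be any point at which the supremum defining u^ε(x) is attained, i.e. u^ε(x) = u(y) − |x − y|²/(2ε). Then y = x + ε∇u^ε(x) (in particular the maximizer is unique) and ∇u^ε(x) belongs to the superdifferential D⁺u(y). -/

import Mathlib

open Set Metric

/-- The sup-convolution `u^ε` of a function `u : Ω → ℝ`. -/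
noncomputable def supConv {n : ℕ} (ε : ℝ) (Ω : Set (EuclideanSpace ℝ (Fin n)))
    (u : EuclideanSpace ℝ (Fin n) → ℝ) (x : EuclideanSpace ℝ (Fin n)) : ℝ :=
  sSup ((fun y => u y - ‖x - y‖ ^ 2 / (2 * ε)) '' Ω)

/-- The radius `ρ(ε) = 2 √(ε ⬝ sup_Ω |u|)`. -/
noncomputable def rho {n : ℕ} (ε : ℝ) (Ω : Set (EuclideanSpace ℝ (Fin n)))
    (u : EuclideanSpace ℝ (Fin n) → ℝ) : ℝ :=
  2 * Real.sqrt (ε * sSup ((fun y => |u y|) '' Ω))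

/-- The superdifferential `D⁺u(y)`: the set of `p` such that
`limsup_{z → y} (u z - u y - ⟨p, z - y⟩)/‖z - y‖ ≤ 0`. -/
def superdiff {n : ℕ} (u : EuclideanSpace ℝ (Fin n) → ℝ)
    (y : EuclideanSpace ℝ (Fin n)) : Set (EuclideanSpace ℝ (Fin n)) :=
  {p | ∀ c : ℝ, 0 < c → ∀ᶠ z in nhds y,
    u z - u y - (inner ℝ p (z - y) : ℝ) ≤ c * ‖z - y‖}

theorem supConv_magic_property
    {n : ℕ} (Ω : Set (EuclideanSpace ℝ (Fin n))) (hΩopen : IsOpen Ω)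
    (u : EuclideanSpace ℝ (Fin n) → ℝ)
    (hu : ContinuousOn u Ω) (hubdd : ∃ M : ℝ, ∀ y ∈ Ω, |u y| ≤ M)
    (ε : ℝ) (hε : 0 < ε)
    (x : EuclideanSpace ℝ (Fin n))
    (hx : Metric.closedBall x (rho ε Ω u) ⊆ Ω)
    (hdiff : DifferentiableAt ℝ (supConv ε Ω u) x)
    (y : EuclideanSpace ℝ (Fin n)) (hy : y ∈ Ω)
    (hmax : supConv ε Ω u x = u y - ‖x - y‖ ^ 2 / (2 * ε)) :
    y = x + ε • gradient (supConv ε Ω u) x ∧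
    gradient (supConv ε Ω u) x ∈ superdiff u y := by
  obtain ⟨M, hM⟩ := hubdd
  set v := supConv ε Ω u with hv
  have hkey : ∀ z w, z ∈ Ω → u z - ‖w - z‖ ^ 2 / (2 * ε) ≤ v w := by
    intro z w hz
    refine le_csSup ⟨M, ?_⟩ ⟨z, hz, rfl⟩
    rintro a ⟨z', hz', rfl⟩
    have h1 : 0 ≤ ‖w - z'‖ ^ 2 / (2 * ε) := by positivity
    have h2 := abs_le.1 (hM z' hz')
    simp only
    linarith [h2.2]
  set p := gradient v x with hpdef
  have hp : HasGradientAt v p x := hdiff.hasGradientAt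
  set q : EuclideanSpace ℝ (Fin n) := (ε⁻¹ : ℝ) • (y - x) with hq
  -- gradient of the touching paraboloid
  have hφ : HasGradientAt (fun z => u y - ‖z - y‖ ^ 2 / (2 * ε)) q x := by
    rw [hasGradientAt_iff_isLittleO]
    have heq : (fun x' => (u y - ‖x' - y‖ ^ 2 / (2 * ε)) - (u y - ‖x - y‖ ^ 2 / (2 * ε))
        - (inner ℝ q (x' - x) : ℝ)) = fun x' => -(‖x' - x‖ ^ 2) / (2 * ε) := by
      funext x'
      have hab : x' - y = (x' - x) - (y - x) := by abel
      have hxy : x - y = -(y - x) := by abel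
      have hexp : ‖x' - y‖ ^ 2 =
          ‖x' - x‖ ^ 2 - 2 * (inner ℝ (x' - x) (y - x) : ℝ) + ‖y - x‖ ^ 2 := by
        rw [hab, norm_sub_sq_real]
      have hxy2 : ‖x - y‖ ^ 2 = ‖y - x‖ ^ 2 := by rw [hxy, norm_neg]
      have hinner : (inner ℝ q (x' - x) : ℝ) = ε⁻¹ * (inner ℝ (x' - x) (y - x) : ℝ) := by
        rw [hq, real_inner_smul_left, real_inner_comm]
      rw [hexp, hxy2, hinner]
      have hε' : (2 : ℝ) * ε ≠ 0 := by positivity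
      field_simp
      ring
    rw [heq, Asymptotics.isLittleO_iff]
    intro c hc
    have hmem : Metric.closedBall x (c * (2 * ε)) ∈ nhds x :=
      Metric.closedBall_mem_nhds x (by positivity)
    filter_upwards [hmem] with x' hx'
    have hd : ‖x' - x‖ ≤ c * (2 * ε) := by
      simpa [dist_eq_norm] using hx'
    have hn : ‖-(‖x' - x‖ ^ 2) / (2 * ε)‖ = ‖x' - x‖ ^ 2 / (2 * ε) := by
      rw [Real.norm_eq_abs, abs_div, abs_neg, abs_of_nonneg (by positivity : (0:ℝ) ≤ ‖x' - x‖ ^ 2),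
        abs_of_pos (by positivity : (0:ℝ) < 2 * ε)]
    rw [hn]
    rw [div_le_iff₀ (by positivity : (0:ℝ) < 2 * ε)]
    have h0 : (0:ℝ) ≤ ‖x' - x‖ := norm_nonneg _
    nlinarith
  -- the difference has a local min at x
  have hmin : IsLocalMin (fun z => v z - (u y - ‖z - y‖ ^ 2 / (2 * ε))) x := by
    apply Filter.Eventually.of_forall
    intro z
    have h1 := hkey y z hy
    have h2 : v x = u y - ‖x - y‖ ^ 2 / (2 * ε) := hmax
    simp only
    linarith
  have hψ : HasFDerivAt (fun z => v z - (u y - ‖z - y‖ ^ 2 / (2 * ε)))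
      (InnerProductSpace.toDual ℝ _ p - InnerProductSpace.toDual ℝ _ q) x :=
    hp.hasFDerivAt.sub hφ.hasFDerivAt
  have hzero := hmin.hasFDerivAt_eq_zero hψ
  have hpq : p = q := by
    apply (InnerProductSpace.toDual ℝ (EuclideanSpace ℝ (Fin n))).injective
    have := sub_eq_zero.1 hzero
    exact this
  have heq1 : y = x + ε • p := by
    rw [hpq, hq, smul_smul, mul_inv_cancel₀ hε.ne']
    simp
  refine ⟨heq1, ?_⟩
  -- second part: p ∈ D⁺u(y)
  intro c hc
  have hlo := hasGradientAt_iff_isLittleO.1 hp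
  have hb := Asymptotics.isLittleO_iff.1 hlo hc
  have hT : Filter.Tendsto (fun z : EuclideanSpace ℝ (Fin n) => x + (z - y)) (nhds y) (nhds x) := by
    have hcont : Continuous fun z : EuclideanSpace ℝ (Fin n) => x + (z - y) :=
      continuous_const.add (continuous_id.sub continuous_const)
    have := hcont.tendsto y
    simpa using this
  filter_upwards [hΩopen.eventually_mem hy, hT.eventually hb] with z hz hbz
  have hTz : (x + (z - y)) - x = z - y := by abel
  rw [hTz] at hbz
  have h1 : u z - u y ≤ v (x + (z - y)) - v x := by
    have h3 := hkey z (x + (z - y)) hz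
    have hw : x + (z - y) - z = x - y := by abel
    rw [hw] at h3
    have h2 : v x = u y - ‖x - y‖ ^ 2 / (2 * ε) := hmax
    linarith
  have h4 : v (x + (z - y)) - v x - (inner ℝ p (z - y) : ℝ) ≤ c * ‖z - y‖ := by
    calc v (x + (z - y)) - v x - (inner ℝ p (z - y) : ℝ)
        ≤ ‖v (x + (z - y)) - v x - (inner ℝ p (z - y) : ℝ)‖ := Real.le_norm_self _
      _ ≤ c * ‖z - y‖ := hbz
  linarith
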